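/- Let B : ℕ → ℕ → ℂ satisfy the GL(3) Hecke relations (multiplicativity in coprime arguments, B(1,1)=1, B(n,1)·B(m₁,m₂) = ∑_{d₀d₁d₂=n, d₁∣m₁, d₂∣m₂} B(m₁d₀/d₁, m₂d₁/d₂), and the dual relation). Then for all positive integers n₁, n₂, m: B(n₁n₂, m) = ∑_{abc = n₁, b ∣ mc, c ∣ n₂} μ(b)·μ(c)·B(n₂/c, mc/b)·B(a, 1). -/

import Mathlib

open scoped BigOperators

/-- The GL(3) Hecke multiplication sum:
`∑_{d₀d₁d₂ = n, d₁ ∣ m₁, d₂ ∣ m₂} B (m₁ d₀ / d₁) (m₂ d₁ / d₂)`. -/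
noncomputable def heckeSum (B : ℕ → ℕ → ℂ) (n m₁ m₂ : ℕ) : ℂ :=
  ∑ d₁ ∈ n.divisors, ∑ d₂ ∈ (n / d₁).divisors,
    if d₁ ∣ m₁ ∧ d₂ ∣ m₂ then B (m₁ * (n / d₁ / d₂) / d₁) (m₂ * d₁ / d₂) else 0

/-- The dual GL(3) Hecke multiplication sum:
`∑_{d₀d₁d₂ = n, d₁ ∣ m₁, d₂ ∣ m₂} B (m₁ d₂ / d₁) (m₂ d₀ / d₂)`. -/
noncomputable def heckeSumDual (B : ℕ → ℕ → ℂ) (n m₁ m₂ : ℕ) : ℂ :=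
  ∑ d₁ ∈ n.divisors, ∑ d₂ ∈ (n / d₁).divisors,
    if d₁ ∣ m₁ ∧ d₂ ∣ m₂ then B (m₁ * d₂ / d₁) (m₂ * (n / d₁ / d₂) / d₂) else 0

/-! ### Auxiliary definitions -/

noncomputable def muC (x : ℕ) : ℂ := ((ArithmeticFunction.moebius x : ℤ) : ℂ)

noncomputable def rhsSum (B : ℕ → ℕ → ℂ) (n₁ n₂ m : ℕ) : ℂ :=
  ∑ c ∈ n₁.divisors, ∑ b ∈ (n₁ / c).divisors,
    if b ∣ m * c ∧ c ∣ n₂ then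
      muC b * muC c * B (n₂ / c) (m * c / b) * B (n₁ / c / b) 1
    else 0

noncomputable def Fq (B : ℕ → ℕ → ℂ) (n₁ n₂ m d₁ d₂ c b : ℕ) : ℂ :=
  if (d₁ ∣ n₂ ∧ d₂ ∣ m) ∧ (b ∣ m * d₁ / d₂ * c ∧ c ∣ n₂ / d₁) then
    muC b * muC c * B (n₂ / d₁ / c) (m * d₁ / d₂ * c / b) * B (n₁ / d₁ / d₂ / c / b) 1
  else 0

/-! ### Helper lemmas on divisor sums -/

lemma div_ne_zero_of_dvd {a b : ℕ} (hba : b ∣ a) (ha : a ≠ 0) : a / b ≠ 0 :=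
  (Nat.div_pos (Nat.le_of_dvd (Nat.pos_of_ne_zero ha) hba)
    (Nat.pos_of_dvd_of_pos hba (Nat.pos_of_ne_zero ha))).ne'

lemma inner_reindex {n d : ℕ} (hn : n ≠ 0) (hd : d ∣ n) (f : ℕ → ℂ) :
    ∑ e ∈ (n / d).divisors, f e = ∑ k ∈ n.divisors, if d ∣ k then f (k / d) else 0 := by
  have hd0 : 0 < d := Nat.pos_of_dvd_of_pos hd (Nat.pos_of_ne_zero hn)
  rw [← Finset.sum_filter]
  refine Finset.sum_nbij' (fun e => d * e) (fun k => k / d) ?_ ?_ ?_ ?_ ?_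
  · intro e he
    rw [Finset.mem_filter, Nat.mem_divisors]
    exact ⟨⟨(Nat.dvd_div_iff_mul_dvd hd).1 (Nat.dvd_of_mem_divisors he), hn⟩, dvd_mul_right d e⟩
  · intro k hk
    rw [Finset.mem_filter, Nat.mem_divisors] at hk
    rw [Nat.mem_divisors]
    refine ⟨(Nat.dvd_div_iff_mul_dvd hd).2 ?_, div_ne_zero_of_dvd hd hn⟩
    rw [Nat.mul_div_cancel' hk.2]
    exact hk.1.1
  · intro e he
    exact Nat.mul_div_cancel_left e hd0
  · intro k hk
    rw [Finset.mem_filter] at hk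
    exact Nat.mul_div_cancel' hk.2
  · intro e he
    rw [Nat.mul_div_cancel_left e hd0]

lemma pair_sum (n : ℕ) (hn : n ≠ 0) (f : ℕ → ℕ → ℂ) :
    ∑ d ∈ n.divisors, ∑ e ∈ (n / d).divisors, f d e
      = ∑ k ∈ n.divisors, ∑ d ∈ k.divisors, f d (k / d) := by
  calc ∑ d ∈ n.divisors, ∑ e ∈ (n / d).divisors, f d e
      = ∑ d ∈ n.divisors, ∑ k ∈ n.divisors, if d ∣ k then f d (k / d) else 0 :=
        Finset.sum_congr rfl fun d hd => inner_reindex hn (Nat.dvd_of_mem_divisors hd) _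
    _ = ∑ k ∈ n.divisors, ∑ d ∈ n.divisors, if d ∣ k then f d (k / d) else 0 := Finset.sum_comm
    _ = ∑ k ∈ n.divisors, ∑ d ∈ k.divisors, f d (k / d) := by
        refine Finset.sum_congr rfl fun k hk => ?_
        rw [← Finset.sum_filter, Nat.divisors_filter_dvd_of_dvd hn (Nat.dvd_of_mem_divisors hk)]

lemma swap_div (n : ℕ) (hn : n ≠ 0) (f : ℕ → ℕ → ℂ) :
    ∑ d ∈ n.divisors, ∑ e ∈ (n / d).divisors, f d e
      = ∑ e ∈ n.divisors, ∑ d ∈ (n / e).divisors, f d e := by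
  rw [pair_sum n hn f, pair_sum n hn fun e d => f d e]
  refine Finset.sum_congr rfl fun k hk => ?_
  have hk0 : k ≠ 0 := (Nat.pos_of_mem_divisors hk).ne'
  rw [← Nat.sum_div_divisors k fun d => f d (k / d)]
  refine Finset.sum_congr rfl fun e he => ?_
  rw [Nat.div_div_self (Nat.dvd_of_mem_divisors he) hk0]

lemma moebius_sum (c : ℕ) (hc : c ≠ 0) :
    ∑ d ∈ c.divisors, muC (c / d) = if c = 1 then 1 else 0 := by
  unfold muC
  rw [Nat.sum_div_divisors c fun d => ((ArithmeticFunction.moebius d : ℤ) : ℂ)]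
  have h2 : ∑ d ∈ c.divisors, (ArithmeticFunction.moebius d : ℤ)
      = if c = 1 then 1 else 0 := by
    rw [← ArithmeticFunction.coe_mul_zeta_apply, ArithmeticFunction.moebius_mul_coe_zeta,
      ArithmeticFunction.one_apply]
  calc (c.divisors.sum fun d => ((ArithmeticFunction.moebius d : ℤ) : ℂ))
      = ((∑ d ∈ c.divisors, (ArithmeticFunction.moebius d : ℤ) : ℤ) : ℂ) := by push_cast; rfl
    _ = _ := by rw [h2]; split <;> simp

/-! ### The key Möbius-inversion identity -/

lemma lemA (B : ℕ → ℕ → ℂ) (n₁ n₂ m : ℕ) (h₁ : 0 < n₁) (h₂ : 0 < n₂) (hm : 0 < m) :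
    ∑ d₁ ∈ n₁.divisors, ∑ d₂ ∈ (n₁ / d₁).divisors,
        (if d₁ ∣ n₂ ∧ d₂ ∣ m then rhsSum B (n₁ / d₁ / d₂) (n₂ / d₁) (m * d₁ / d₂) else 0)
      = B n₂ m * B n₁ 1 := by
  have hn₁ : n₁ ≠ 0 := h₁.ne'
  have step0 : ∑ d₁ ∈ n₁.divisors, ∑ d₂ ∈ (n₁ / d₁).divisors,
        (if d₁ ∣ n₂ ∧ d₂ ∣ m then rhsSum B (n₁ / d₁ / d₂) (n₂ / d₁) (m * d₁ / d₂) else 0)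
      = ∑ d₁ ∈ n₁.divisors, ∑ d₂ ∈ (n₁ / d₁).divisors, ∑ c ∈ (n₁ / d₁ / d₂).divisors,
          ∑ b ∈ (n₁ / d₁ / d₂ / c).divisors, Fq B n₁ n₂ m d₁ d₂ c b := by
    refine Finset.sum_congr rfl fun d₁ _ => Finset.sum_congr rfl fun d₂ _ => ?_
    by_cases h : d₁ ∣ n₂ ∧ d₂ ∣ m
    · rw [if_pos h]
      unfold rhsSum
      refine Finset.sum_congr rfl fun c _ => Finset.sum_congr rfl fun b _ => ?_
      simp [Fq, h.1, h.2]
    · rw [if_neg h]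
      symm
      refine Finset.sum_eq_zero fun c _ => Finset.sum_eq_zero fun b _ => ?_
      rw [Fq, if_neg]
      tauto
  rw [step0]
  have step1 : ∑ d₁ ∈ n₁.divisors, ∑ d₂ ∈ (n₁ / d₁).divisors, ∑ c ∈ (n₁ / d₁ / d₂).divisors,
          ∑ b ∈ (n₁ / d₁ / d₂ / c).divisors, Fq B n₁ n₂ m d₁ d₂ c b
      = ∑ d₁ ∈ n₁.divisors, ∑ c ∈ (n₁ / d₁).divisors, ∑ d₂ ∈ (n₁ / d₁ / c).divisors,
          ∑ b ∈ (n₁ / d₁ / d₂ / c).divisors, Fq B n₁ n₂ m d₁ d₂ c b := by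
    refine Finset.sum_congr rfl fun d₁ hd₁ => ?_
    exact swap_div (n₁ / d₁) (div_ne_zero_of_dvd (Nat.dvd_of_mem_divisors hd₁) hn₁)
      (fun d e => ∑ b ∈ (n₁ / d₁ / d / e).divisors, Fq B n₁ n₂ m d₁ d e b)
  rw [step1]
  have step2 : ∑ d₁ ∈ n₁.divisors, ∑ c ∈ (n₁ / d₁).divisors, ∑ d₂ ∈ (n₁ / d₁ / c).divisors,
          ∑ b ∈ (n₁ / d₁ / d₂ / c).divisors, Fq B n₁ n₂ m d₁ d₂ c b
      = ∑ C ∈ n₁.divisors, ∑ d₁ ∈ C.divisors, ∑ d₂ ∈ (n₁ / d₁ / (C / d₁)).divisors,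
          ∑ b ∈ (n₁ / d₁ / d₂ / (C / d₁)).divisors, Fq B n₁ n₂ m d₁ d₂ (C / d₁) b :=
    pair_sum n₁ hn₁ (fun d₁ c => ∑ d₂ ∈ (n₁ / d₁ / c).divisors,
      ∑ b ∈ (n₁ / d₁ / d₂ / c).divisors, Fq B n₁ n₂ m d₁ d₂ c b)
  rw [step2]
  have step3 : ∑ C ∈ n₁.divisors, ∑ d₁ ∈ C.divisors, ∑ d₂ ∈ (n₁ / d₁ / (C / d₁)).divisors,
          ∑ b ∈ (n₁ / d₁ / d₂ / (C / d₁)).divisors, Fq B n₁ n₂ m d₁ d₂ (C / d₁) b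
      = ∑ C ∈ n₁.divisors, ∑ d₁ ∈ C.divisors, ∑ d₂ ∈ (n₁ / C).divisors,
          ∑ b ∈ (n₁ / C / d₂).divisors, Fq B n₁ n₂ m d₁ d₂ (C / d₁) b := by
    refine Finset.sum_congr rfl fun C hC => Finset.sum_congr rfl fun d₁ hd₁ => ?_
    have hdC : d₁ ∣ C := Nat.dvd_of_mem_divisors hd₁
    have e1 : n₁ / d₁ / (C / d₁) = n₁ / C := by
      rw [Nat.div_div_eq_div_mul, Nat.mul_div_cancel' hdC]
    rw [e1]
    refine Finset.sum_congr rfl fun d₂ _ => ?_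
    have e2 : n₁ / d₁ / d₂ / (C / d₁) = n₁ / C / d₂ := by
      simp only [Nat.div_div_eq_div_mul]
      congr 1
      rw [mul_right_comm, Nat.mul_div_cancel' hdC]
    rw [e2]
  rw [step3]
  have step4 : ∑ C ∈ n₁.divisors, ∑ d₁ ∈ C.divisors, ∑ d₂ ∈ (n₁ / C).divisors,
          ∑ b ∈ (n₁ / C / d₂).divisors, Fq B n₁ n₂ m d₁ d₂ (C / d₁) b
      = ∑ C ∈ n₁.divisors, ∑ bb ∈ (n₁ / C).divisors, ∑ d₁ ∈ C.divisors,
          ∑ d₂ ∈ bb.divisors, Fq B n₁ n₂ m d₁ d₂ (C / d₁) (bb / d₂) := by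
    refine Finset.sum_congr rfl fun C hC => ?_
    have hne : n₁ / C ≠ 0 := div_ne_zero_of_dvd (Nat.dvd_of_mem_divisors hC) hn₁
    calc ∑ d₁ ∈ C.divisors, ∑ d₂ ∈ (n₁ / C).divisors,
            ∑ b ∈ (n₁ / C / d₂).divisors, Fq B n₁ n₂ m d₁ d₂ (C / d₁) b
        = ∑ d₁ ∈ C.divisors, ∑ bb ∈ (n₁ / C).divisors,
            ∑ d₂ ∈ bb.divisors, Fq B n₁ n₂ m d₁ d₂ (C / d₁) (bb / d₂) :=
          Finset.sum_congr rfl fun d₁ _ =>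
            pair_sum (n₁ / C) hne (fun d₂ b => Fq B n₁ n₂ m d₁ d₂ (C / d₁) b)
      _ = _ := Finset.sum_comm
  rw [step4]
  -- now collapse the inner double sum
  have inner_eq : ∀ C ∈ n₁.divisors, ∀ bb ∈ (n₁ / C).divisors,
      ∑ d₁ ∈ C.divisors, ∑ d₂ ∈ bb.divisors, Fq B n₁ n₂ m d₁ d₂ (C / d₁) (bb / d₂)
        = if C = 1 ∧ bb = 1 then B n₂ m * B n₁ 1 else 0 := by
    intro C hC bb hbb
    have hC0 : C ≠ 0 := (Nat.pos_of_mem_divisors hC).ne'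
    have hbb0 : bb ≠ 0 := (Nat.pos_of_mem_divisors hbb).ne'
    have term_eq : ∀ d₁ ∈ C.divisors, ∀ d₂ ∈ bb.divisors,
        Fq B n₁ n₂ m d₁ d₂ (C / d₁) (bb / d₂)
          = if C ∣ n₂ ∧ bb ∣ m * C then
              muC (C / d₁) * ((if d₂ ∣ m then muC (bb / d₂) else 0) *
                (B (n₂ / C) (m * C / bb) * B (n₁ / C / bb) 1))
            else 0 := by
      intro d₁ hd₁ d₂ hd₂
      have hd₁C : d₁ ∣ C := Nat.dvd_of_mem_divisors hd₁
      have hd₂bb : d₂ ∣ bb := Nat.dvd_of_mem_divisors hd₂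
      have hd₁pos : 0 < d₁ := Nat.pos_of_mem_divisors hd₁
      have hd₂pos : 0 < d₂ := Nat.pos_of_mem_divisors hd₂
      by_cases hd2m : d₂ ∣ m
      case neg =>
        rw [Fq, if_neg (by tauto)]
        by_cases hP : C ∣ n₂ ∧ bb ∣ m * C
        · rw [if_pos hP, if_neg hd2m]; ring
        · rw [if_neg hP]
      case pos =>
        obtain ⟨m', rfl⟩ := hd2m
        obtain ⟨c', rfl⟩ := hd₁C
        obtain ⟨b', rfl⟩ := hd₂bb
        have h1 : d₁ * c' / d₁ = c' := Nat.mul_div_cancel_left _ hd₁pos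
        have h2 : d₂ * b' / d₂ = b' := Nat.mul_div_cancel_left _ hd₂pos
        have h3 : d₂ * m' * d₁ / d₂ = m' * d₁ := by
          rw [mul_assoc]; exact Nat.mul_div_cancel_left _ hd₂pos
        rw [Fq, h1, h2, h3]
        have hcond : ((d₁ ∣ n₂ ∧ d₂ ∣ d₂ * m') ∧ (b' ∣ m' * d₁ * c' ∧ c' ∣ n₂ / d₁)) ↔
            (d₁ * c' ∣ n₂ ∧ d₂ * b' ∣ d₂ * m' * (d₁ * c')) := by
          constructor
          · rintro ⟨⟨h1', -⟩, h2', h3'⟩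
            refine ⟨(Nat.dvd_div_iff_mul_dvd h1').1 h3', ?_⟩
            rw [show d₂ * m' * (d₁ * c') = d₂ * (m' * d₁ * c') by ring]
            exact mul_dvd_mul_left d₂ h2'
          · rintro ⟨ha, hb⟩
            have h1' : d₁ ∣ n₂ := (dvd_mul_right d₁ c').trans ha
            refine ⟨⟨h1', dvd_mul_right _ _⟩, ?_, (Nat.dvd_div_iff_mul_dvd h1').2 ha⟩
            have hb' : d₂ * b' ∣ d₂ * (m' * d₁ * c') := by
              rwa [show d₂ * m' * (d₁ * c') = d₂ * (m' * d₁ * c') by ring] at hb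
            exact (Nat.mul_dvd_mul_iff_left hd₂pos).1 hb'
        by_cases hP : d₁ * c' ∣ n₂ ∧ d₂ * b' ∣ d₂ * m' * (d₁ * c')
        · rw [if_pos (hcond.2 hP), if_pos hP, if_pos (dvd_mul_right d₂ m')]
          have e_a : n₂ / d₁ / c' = n₂ / (d₁ * c') := Nat.div_div_eq_div_mul _ _ _
          have e_b : m' * d₁ * c' / b' = d₂ * m' * (d₁ * c') / (d₂ * b') := by
            rw [show d₂ * m' * (d₁ * c') = d₂ * (m' * d₁ * c') by ring,
              Nat.mul_div_mul_left _ _ hd₂pos]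
          have e_c : n₁ / d₁ / d₂ / c' / b' = n₁ / (d₁ * c') / (d₂ * b') := by
            simp only [Nat.div_div_eq_div_mul]
            congr 1
            ring
          rw [e_a, e_b, e_c]
          ring
        · rw [if_neg (fun hh => hP (hcond.1 hh)), if_neg hP]
    calc ∑ d₁ ∈ C.divisors, ∑ d₂ ∈ bb.divisors, Fq B n₁ n₂ m d₁ d₂ (C / d₁) (bb / d₂)
        = ∑ d₁ ∈ C.divisors, ∑ d₂ ∈ bb.divisors,
            (if C ∣ n₂ ∧ bb ∣ m * C then
              muC (C / d₁) * ((if d₂ ∣ m then muC (bb / d₂) else 0) *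
                (B (n₂ / C) (m * C / bb) * B (n₁ / C / bb) 1))
            else 0) :=
          Finset.sum_congr rfl fun d₁ hd₁ => Finset.sum_congr rfl fun d₂ hd₂ =>
            term_eq d₁ hd₁ d₂ hd₂
      _ = if C = 1 ∧ bb = 1 then B n₂ m * B n₁ 1 else 0 := by
          by_cases hR : C ∣ n₂ ∧ bb ∣ m * C
          · simp only [if_pos hR]
            rw [← Finset.sum_mul_sum]
            rw [moebius_sum C hC0]
            by_cases hC1 : C = 1
            · subst hC1
              simp only [if_pos rfl, one_mul, mul_one, Nat.div_one, if_true]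
              have hbm : bb ∣ m := by simpa using hR.2
              have hcol : ∑ d₂ ∈ bb.divisors, (if d₂ ∣ m then muC (bb / d₂) else 0)
                  = if bb = 1 then 1 else 0 := by
                rw [← moebius_sum bb hbb0]
                refine Finset.sum_congr rfl fun d₂ hd₂ => ?_
                rw [if_pos ((Nat.dvd_of_mem_divisors hd₂).trans hbm)]
              rw [← Finset.sum_mul, hcol]
              by_cases hbb1 : bb = 1
              · subst hbb1
                simp
              · simp [hbb1]
            · simp only [if_neg hC1, zero_mul]
              rw [if_neg (fun hh => hC1 hh.1)]
          · rw [if_neg (fun hh : C = 1 ∧ bb = 1 => hR (by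
              obtain ⟨h1', h2'⟩ := hh
              subst h1'; subst h2'
              exact ⟨one_dvd _, one_dvd _⟩))]
            refine Finset.sum_eq_zero fun d₁ _ => Finset.sum_eq_zero fun d₂ _ => ?_
            rw [if_neg hR]
  calc ∑ C ∈ n₁.divisors, ∑ bb ∈ (n₁ / C).divisors, ∑ d₁ ∈ C.divisors,
          ∑ d₂ ∈ bb.divisors, Fq B n₁ n₂ m d₁ d₂ (C / d₁) (bb / d₂)
      = ∑ C ∈ n₁.divisors, ∑ bb ∈ (n₁ / C).divisors,
          (if C = 1 ∧ bb = 1 then B n₂ m * B n₁ 1 else 0) :=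
        Finset.sum_congr rfl fun C hC => Finset.sum_congr rfl fun bb hbb =>
          inner_eq C hC bb hbb
    _ = B n₂ m * B n₁ 1 := by
        rw [Finset.sum_eq_single_of_mem 1 (Nat.one_mem_divisors.mpr hn₁)]
        · rw [Finset.sum_eq_single_of_mem 1
            (by simpa [Nat.div_one] using Nat.one_mem_divisors.mpr hn₁)]
          · simp
          · intro bb _ hbb1
            rw [if_neg (fun hh => hbb1 hh.2)]
        · intro C _ hC1
          exact Finset.sum_eq_zero fun bb _ => by rw [if_neg (fun hh => hC1 hh.1)]

/-! ### Pointwise summand functions for the Hecke sum -/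

noncomputable def Wf (B : ℕ → ℕ → ℂ) (n₁ n₂ m d₁ d₂ : ℕ) : ℂ :=
  if d₁ ∣ n₂ ∧ d₂ ∣ m then B (n₂ * (n₁ / d₁ / d₂) / d₁) (m * d₁ / d₂) else 0

noncomputable def Vf (B : ℕ → ℕ → ℂ) (n₁ n₂ m d₁ d₂ : ℕ) : ℂ :=
  if d₁ ∣ n₂ ∧ d₂ ∣ m then rhsSum B (n₁ / d₁ / d₂) (n₂ / d₁) (m * d₁ / d₂) else 0

theorem hecke_lemma_product
    (B : ℕ → ℕ → ℂ)
    (h11 : B 1 1 = 1)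
    (hmul : ∀ m₁ m₂ m₁' m₂' : ℕ, 0 < m₁ → 0 < m₂ → 0 < m₁' → 0 < m₂' →
      Nat.Coprime (m₁ * m₂) (m₁' * m₂') →
      B (m₁ * m₁') (m₂ * m₂') = B m₁ m₂ * B m₁' m₂')
    (hhecke : ∀ n m₁ m₂ : ℕ, 0 < n → 0 < m₁ → 0 < m₂ →
      B n 1 * B m₁ m₂ = heckeSum B n m₁ m₂)
    (hdual : ∀ n m₁ m₂ : ℕ, 0 < n → 0 < m₁ → 0 < m₂ →
      B 1 n * B m₁ m₂ = heckeSumDual B n m₁ m₂) :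
    ∀ n₁ n₂ m : ℕ, 0 < n₁ → 0 < n₂ → 0 < m →
      B (n₁ * n₂) m = ∑ c ∈ n₁.divisors, ∑ b ∈ (n₁ / c).divisors,
        if b ∣ m * c ∧ c ∣ n₂ then
          ((ArithmeticFunction.moebius b : ℤ) : ℂ) * ((ArithmeticFunction.moebius c : ℤ) : ℂ) *
            B (n₂ / c) (m * c / b) * B (n₁ / c / b) 1
        else 0 := by
  intro n₁
  induction n₁ using Nat.strong_induction_on with
  | _ n₁ IH =>
  intro n₂ m h₁ h₂ hm
  have hn₁ : n₁ ≠ 0 := h₁.ne'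
  show B (n₁ * n₂) m = rhsSum B n₁ n₂ m
  have hWV : ∀ d₁ ∈ n₁.divisors, ∀ d₂ ∈ (n₁ / d₁).divisors, ¬(d₁ = 1 ∧ d₂ = 1) →
      Wf B n₁ n₂ m d₁ d₂ = Vf B n₁ n₂ m d₁ d₂ := by
    intro d₁ hd₁ d₂ hd₂ hne
    by_cases hc : d₁ ∣ n₂ ∧ d₂ ∣ m
    · rw [Wf, Vf, if_pos hc, if_pos hc]
      have hd₁pos : 0 < d₁ := Nat.pos_of_mem_divisors hd₁
      have hd₂pos : 0 < d₂ := Nat.pos_of_mem_divisors hd₂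
      have hd₂n : d₂ ∣ n₁ / d₁ := Nat.dvd_of_mem_divisors hd₂
      have hdivpos : 0 < n₁ / d₁ := Nat.pos_of_mem_divisors (Nat.mem_divisors_self _
        (div_ne_zero_of_dvd (Nat.dvd_of_mem_divisors hd₁) hn₁))
      have hKpos : 0 < n₁ / d₁ / d₂ := Nat.div_pos (Nat.le_of_dvd hdivpos hd₂n) hd₂pos
      have hKlt : n₁ / d₁ / d₂ < n₁ := by
        have h12 : 1 < d₁ * d₂ := by
          rcases Nat.lt_or_ge 1 (d₁ * d₂) with h | h
          · exact h
          · exfalso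
            have : d₁ * d₂ = 1 := le_antisymm h (Nat.one_le_iff_ne_zero.2
              (Nat.mul_ne_zero hd₁pos.ne' hd₂pos.ne'))
            exact hne ⟨Nat.eq_one_of_mul_eq_one_right this, Nat.eq_one_of_mul_eq_one_left this⟩
        rw [Nat.div_div_eq_div_mul]
        exact Nat.div_lt_self h₁ h12
      have harg : n₂ * (n₁ / d₁ / d₂) / d₁ = (n₁ / d₁ / d₂) * (n₂ / d₁) := by
        obtain ⟨t, rfl⟩ := hc.1
        rw [Nat.mul_div_cancel_left _ hd₁pos,
          show d₁ * t * (n₁ / d₁ / d₂) = d₁ * (t * (n₁ / d₁ / d₂)) by ring,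
          Nat.mul_div_cancel_left _ hd₁pos, mul_comm]
      rw [harg]
      have hpos2 : 0 < n₂ / d₁ := Nat.div_pos (Nat.le_of_dvd h₂ hc.1) hd₁pos
      have hpos3 : 0 < m * d₁ / d₂ := Nat.div_pos
        (Nat.le_of_dvd (Nat.mul_pos hm hd₁pos) (hc.2.mul_right d₁)) hd₂pos
      exact IH (n₁ / d₁ / d₂) hKlt (n₂ / d₁) (m * d₁ / d₂) hKpos hpos2 hpos3
    · rw [Wf, Vf, if_neg hc, if_neg hc]
  have E1 : ∑ d₁ ∈ n₁.divisors, ∑ d₂ ∈ (n₁ / d₁).divisors, Wf B n₁ n₂ m d₁ d₂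
      = B n₁ 1 * B n₂ m := (hhecke n₁ n₂ m h₁ h₂ hm).symm
  have E2 : ∑ d₁ ∈ n₁.divisors, ∑ d₂ ∈ (n₁ / d₁).divisors, Vf B n₁ n₂ m d₁ d₂
      = B n₂ m * B n₁ 1 := lemA B n₁ n₂ m h₁ h₂ hm
  have E3 : ∑ d₁ ∈ n₁.divisors, ∑ d₂ ∈ (n₁ / d₁).divisors,
        (Wf B n₁ n₂ m d₁ d₂ - Vf B n₁ n₂ m d₁ d₂)
      = Wf B n₁ n₂ m 1 1 - Vf B n₁ n₂ m 1 1 := by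
    rw [Finset.sum_eq_single_of_mem 1 (Nat.one_mem_divisors.mpr hn₁)]
    · rw [Finset.sum_eq_single_of_mem 1
        (by simpa [Nat.div_one] using Nat.one_mem_divisors.mpr hn₁)]
      intro d₂ hd₂ hne
      rw [hWV 1 (Nat.one_mem_divisors.mpr hn₁) d₂ hd₂ (fun hh => hne hh.2), sub_self]
    · intro d₁ hd₁ hne
      exact Finset.sum_eq_zero fun d₂ hd₂ => by
        rw [hWV d₁ hd₁ d₂ hd₂ (fun hh => hne hh.1), sub_self]
  have E4 : ∑ d₁ ∈ n₁.divisors, ∑ d₂ ∈ (n₁ / d₁).divisors,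
        (Wf B n₁ n₂ m d₁ d₂ - Vf B n₁ n₂ m d₁ d₂)
      = (∑ d₁ ∈ n₁.divisors, ∑ d₂ ∈ (n₁ / d₁).divisors, Wf B n₁ n₂ m d₁ d₂)
        - ∑ d₁ ∈ n₁.divisors, ∑ d₂ ∈ (n₁ / d₁).divisors, Vf B n₁ n₂ m d₁ d₂ := by
    rw [← Finset.sum_sub_distrib]
    exact Finset.sum_congr rfl fun d₁ _ => Finset.sum_sub_distrib _ _
  have key : Wf B n₁ n₂ m 1 1 - Vf B n₁ n₂ m 1 1 = 0 := by
    rw [← E3, E4, E1, E2]; ring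
  have hW11 : Wf B n₁ n₂ m 1 1 = B (n₂ * n₁) m := by
    simp [Wf]
  have hV11 : Vf B n₁ n₂ m 1 1 = rhsSum B n₁ n₂ m := by
    simp [Vf]
  rw [mul_comm n₁ n₂]
  rw [hW11, hV11] at key
  exact sub_eq_zero.mp key
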